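/- Fubini theorem for ends: Let A, B be categories with variance, (R₁,L₁), (R₂,L₂) spans on A and B, and F : A × B → C a functor of variance for the product variance. Suppose the end ∫_{L₁} F^b exists for every object b of B, with universal wedges ω^b, yielding the functor of variance ∫_{L₁}F : B → C. Then the transposition (c, θ : c ⇒_{L₂} ∫_{L₁}F) ↦ (c, θ̃) with θ̃_{(x,y)} = ω^{L₂(y)}_x ∘ θ_y is an isomorphism between the category of L₂-wedges of ∫_{L₁}F and the category of (L₁×L₂)-wedges of F; in particular ∫_{L₁×L₂} F exists iff ∫_{L₂}∫_{L₁}F exists, and they agree. -/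

import Mathlib

open CategoryTheory

universe v u v₂ u₂ v₃ u₃ v₄ u₄

/-- A variance `(E,M)` on a category `C`: wide subcategories such that both `(E,M)` and
`(M,E)` are strict factorization systems.  The chosen terminating factorization of `f` is
`f = tm f ∘ te f` (i.e. `f = f^m ∘ f^e`) through the object `tObj f` (the terminating
object `f_t`), and the chosen starting factorization is `f = se f ∘ sm f`
(i.e. `f = f_e ∘ f_m`) through `sObj f` (the starting object `f_s`). -/
structure Variance (C : Type u) [Category.{v} C] where
  E : MorphismProperty C
  M : MorphismProperty C
  E_id : ∀ X : C, E (𝟙 X)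
  M_id : ∀ X : C, M (𝟙 X)
  E_comp : ∀ {X Y Z : C} (f : X ⟶ Y) (g : Y ⟶ Z), E f → E g → E (f ≫ g)
  M_comp : ∀ {X Y Z : C} (f : X ⟶ Y) (g : Y ⟶ Z), M f → M g → M (f ≫ g)
  tObj : ∀ {X Y : C}, (X ⟶ Y) → C
  te : ∀ {X Y : C} (f : X ⟶ Y), X ⟶ tObj f
  tm : ∀ {X Y : C} (f : X ⟶ Y), tObj f ⟶ Y
  te_mem : ∀ {X Y : C} (f : X ⟶ Y), E (te f)
  tm_mem : ∀ {X Y : C} (f : X ⟶ Y), M (tm f)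
  t_fac : ∀ {X Y : C} (f : X ⟶ Y), te f ≫ tm f = f
  t_uniq : ∀ {X Y : C} (f : X ⟶ Y) (Z : C) (e : X ⟶ Z) (m : Z ⟶ Y),
      E e → M m → e ≫ m = f →
      (⟨Z, e, m⟩ : Σ Z : C, (X ⟶ Z) × (Z ⟶ Y)) = ⟨tObj f, te f, tm f⟩
  sObj : ∀ {X Y : C}, (X ⟶ Y) → C
  sm : ∀ {X Y : C} (f : X ⟶ Y), X ⟶ sObj f
  se : ∀ {X Y : C} (f : X ⟶ Y), sObj f ⟶ Y
  sm_mem : ∀ {X Y : C} (f : X ⟶ Y), M (sm f)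
  se_mem : ∀ {X Y : C} (f : X ⟶ Y), E (se f)
  s_fac : ∀ {X Y : C} (f : X ⟶ Y), sm f ≫ se f = f
  s_uniq : ∀ {X Y : C} (f : X ⟶ Y) (Z : C) (m : X ⟶ Z) (e : Z ⟶ Y),
      M m → E e → m ≫ e = f →
      (⟨Z, m, e⟩ : Σ Z : C, (X ⟶ Z) × (Z ⟶ Y)) = ⟨sObj f, sm f, se f⟩

namespace Variance

variable {C : Type u} [Category.{v} C] (V : Variance C)

lemma tObj_of_E {X Y : C} (f : X ⟶ Y) (h : V.E f) : V.tObj f = Y :=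
  (congrArg Sigma.fst (V.t_uniq f Y f (𝟙 Y) h (V.M_id Y) (Category.comp_id f))).symm

lemma tObj_of_M {X Y : C} (f : X ⟶ Y) (h : V.M f) : V.tObj f = X :=
  (congrArg Sigma.fst (V.t_uniq f X (𝟙 X) f (V.E_id X) h (Category.id_comp f))).symm

lemma sObj_of_M {X Y : C} (f : X ⟶ Y) (h : V.M f) : V.sObj f = Y :=
  (congrArg Sigma.fst (V.s_uniq f Y f (𝟙 Y) h (V.E_id Y) (Category.comp_id f))).symm

lemma sObj_of_E {X Y : C} (f : X ⟶ Y) (h : V.E f) : V.sObj f = X :=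
  (congrArg Sigma.fst (V.s_uniq f X (𝟙 X) f (V.M_id X) h (Category.id_comp f))).symm

lemma tObj_id (X : C) : V.tObj (𝟙 X) = X := V.tObj_of_E _ (V.E_id X)

lemma sObj_id (X : C) : V.sObj (𝟙 X) = X := V.sObj_of_E _ (V.E_id X)

lemma s_comp_aux {x y z : C} (f : x ⟶ y) (g : y ⟶ z) :
    (V.sm f ≫ V.sm (V.se f ≫ V.sm g)) ≫ V.se (V.se f ≫ V.sm g) ≫ V.se g = f ≫ g := by
  have h : V.sm (V.se f ≫ V.sm g) ≫ V.se (V.se f ≫ V.sm g) = V.se f ≫ V.sm g :=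
    V.s_fac _
  rw [Category.assoc, ← Category.assoc (V.sm (V.se f ≫ V.sm g)), h]
  simp only [Category.assoc]
  rw [V.s_fac g, ← Category.assoc, V.s_fac f]

lemma t_comp_aux {x y z : C} (f : x ⟶ y) (g : y ⟶ z) :
    (V.te f ≫ V.te (V.tm f ≫ V.te g)) ≫ V.tm (V.tm f ≫ V.te g) ≫ V.tm g = f ≫ g := by
  have h : V.te (V.tm f ≫ V.te g) ≫ V.tm (V.tm f ≫ V.te g) = V.tm f ≫ V.te g :=
    V.t_fac _
  rw [Category.assoc, ← Category.assoc (V.te (V.tm f ≫ V.te g)), h]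
  simp only [Category.assoc]
  rw [V.t_fac g, ← Category.assoc, V.t_fac f]

/-- `(gf)_s = (g_m f_e)_s`. -/
lemma sObj_comp {x y z : C} (f : x ⟶ y) (g : y ⟶ z) :
    V.sObj (f ≫ g) = V.sObj (V.se f ≫ V.sm g) :=
  (congrArg Sigma.fst (V.s_uniq (f ≫ g) (V.sObj (V.se f ≫ V.sm g))
    (V.sm f ≫ V.sm (V.se f ≫ V.sm g)) (V.se (V.se f ≫ V.sm g) ≫ V.se g)
    (V.M_comp _ _ (V.sm_mem f) (V.sm_mem _))
    (V.E_comp _ _ (V.se_mem _) (V.se_mem g)) (V.s_comp_aux f g))).symm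

/-- `(gf)_t = (g^e f^m)_t`. -/
lemma tObj_comp {x y z : C} (f : x ⟶ y) (g : y ⟶ z) :
    V.tObj (f ≫ g) = V.tObj (V.tm f ≫ V.te g) :=
  (congrArg Sigma.fst (V.t_uniq (f ≫ g) (V.tObj (V.tm f ≫ V.te g))
    (V.te f ≫ V.te (V.tm f ≫ V.te g)) (V.tm (V.tm f ≫ V.te g) ≫ V.tm g)
    (V.E_comp _ _ (V.te_mem f) (V.te_mem _))
    (V.M_comp _ _ (V.tm_mem _) (V.tm_mem g)) (V.t_comp_aux f g))).symm

end Variance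

/-- A functor of variance `(E,M)` (given by the variance structure `V`): it sends a morphism
`f` to a morphism `F(f) : F(f_s) ⟶ F(f_t)`, preserves identities, and satisfies the two
mixed functoriality equations
`F(gf) = F((g^e f^m)^e) ∘ F(f) ∘ F((g_m f_e)_m)` and
`F(gf) = F((g^e f^m)^m) ∘ F(g) ∘ F((g_m f_e)_e)`. -/
structure VFunctor {C : Type u} [Category.{v} C] (V : Variance C)
    (D : Type u₂) [Category.{v₂} D] where
  obj : C → D
  map : ∀ {X Y : C} (f : X ⟶ Y), obj (V.sObj f) ⟶ obj (V.tObj f)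
  map_id : ∀ X : C,
    map (𝟙 X) = eqToHom (congrArg obj (V.sObj_id X)) ≫
      eqToHom (congrArg obj (V.tObj_id X)).symm
  map_comp₁ : ∀ {x y z : C} (f : x ⟶ y) (g : y ⟶ z),
    map (f ≫ g) =
      eqToHom (congrArg obj ((V.sObj_comp f g).trans
        (V.sObj_of_M _ (V.sm_mem (V.se f ≫ V.sm g))).symm)) ≫
      map (V.sm (V.se f ≫ V.sm g)) ≫
      eqToHom (congrArg obj (V.tObj_of_M _ (V.sm_mem (V.se f ≫ V.sm g)))) ≫
      map f ≫
      eqToHom (congrArg obj (V.sObj_of_E _ (V.te_mem (V.tm f ≫ V.te g))).symm) ≫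
      map (V.te (V.tm f ≫ V.te g)) ≫
      eqToHom (congrArg obj ((V.tObj_of_E _ (V.te_mem (V.tm f ≫ V.te g))).trans
        (V.tObj_comp f g).symm))
  map_comp₂ : ∀ {x y z : C} (f : x ⟶ y) (g : y ⟶ z),
    map (f ≫ g) =
      eqToHom (congrArg obj ((V.sObj_comp f g).trans
        (V.sObj_of_E _ (V.se_mem (V.se f ≫ V.sm g))).symm)) ≫
      map (V.se (V.se f ≫ V.sm g)) ≫
      eqToHom (congrArg obj (V.tObj_of_E _ (V.se_mem (V.se f ≫ V.sm g)))) ≫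
      map g ≫
      eqToHom (congrArg obj (V.sObj_of_M _ (V.tm_mem (V.tm f ≫ V.te g))).symm) ≫
      map (V.tm (V.tm f ≫ V.te g)) ≫
      eqToHom (congrArg obj ((V.tObj_of_M _ (V.tm_mem (V.tm f ≫ V.te g))).trans
        (V.tObj_comp f g).symm))

/-- An `L`-wedge on a functor of variance `F`: an object `pt` together with morphisms
`η x : pt ⟶ F(L x)` such that `F(L(f)^e) ∘ η x = F(L(f)^m) ∘ η y` for every `f : x ⟶ y`. -/
structure Wedge {A : Type u} [Category.{v} A] {CC : Type u₂} [Category.{v₂} CC]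
    (V : Variance A) (F : VFunctor V CC) {R : Type*} [Category R] (L : R ⥤ A) where
  pt : CC
  η : ∀ x : R, pt ⟶ F.obj (L.obj x)
  nat : ∀ {x y : R} (f : x ⟶ y),
    η x ≫ eqToHom (congrArg F.obj (V.sObj_of_E _ (V.te_mem (L.map f))).symm) ≫
        F.map (V.te (L.map f)) ≫
        eqToHom (congrArg F.obj (V.tObj_of_E _ (V.te_mem (L.map f)))) =
      η y ≫ eqToHom (congrArg F.obj (V.sObj_of_M _ (V.tm_mem (L.map f))).symm) ≫
        F.map (V.tm (L.map f)) ≫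
        eqToHom (congrArg F.obj (V.tObj_of_M _ (V.tm_mem (L.map f))))

instance Wedge.category {A : Type u} [Category.{v} A] {CC : Type u₂} [Category.{v₂} CC]
    {V : Variance A} {F : VFunctor V CC} {R : Type*} [Category R] {L : R ⥤ A} :
    Category (Wedge V F L) where
  Hom W₁ W₂ := { f : W₁.pt ⟶ W₂.pt // ∀ x : R, f ≫ W₂.η x = W₁.η x }
  id W := ⟨𝟙 W.pt, fun x => Category.id_comp _⟩
  comp f g := ⟨f.1 ≫ g.1, fun x => by rw [Category.assoc, g.2, f.2]⟩
  id_comp f := Subtype.ext (Category.id_comp _)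
  comp_id f := Subtype.ext (Category.comp_id _)
  assoc f g h := Subtype.ext (Category.assoc _ _ _)


section FubiniKit

@[simp] lemma eqToHom_eq_id {C : Type*} [Category C] {X : C} (h : X = X) :
    eqToHom h = 𝟙 X := rfl

lemma comp_heq {C : Type*} [Category C] {X Y Z X' Y' Z' : C}
    (hX : X = X') (hY : Y = Y') (hZ : Z = Z')
    {f : X ⟶ Y} {g : Y ⟶ Z} {f' : X' ⟶ Y'} {g' : Y' ⟶ Z'}
    (hf : HEq f f') (hg : HEq g g') : HEq (f ≫ g) (f' ≫ g') := by
  subst hX; subst hY; subst hZ; rw [eq_of_heq hf, eq_of_heq hg]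

namespace Variance

variable {C : Type u} [Category.{v} C] (V : Variance C)

lemma t_split {X Y Z : C} (f : X ⟶ Y) (e : X ⟶ Z) (m : Z ⟶ Y)
    (he : V.E e) (hm : V.M m) (hc : e ≫ m = f) :
    Z = V.tObj f ∧ HEq e (V.te f) ∧ HEq m (V.tm f) := by
  have h := V.t_uniq f Z e m he hm hc
  obtain ⟨h1, h2⟩ := Sigma.mk.inj_iff.mp h
  subst h1
  obtain ⟨h3, h4⟩ := Prod.mk_inj.mp (eq_of_heq h2)
  exact ⟨rfl, heq_of_eq h3, heq_of_eq h4⟩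

lemma s_split {X Y Z : C} (f : X ⟶ Y) (m : X ⟶ Z) (e : Z ⟶ Y)
    (hm : V.M m) (he : V.E e) (hc : m ≫ e = f) :
    Z = V.sObj f ∧ HEq m (V.sm f) ∧ HEq e (V.se f) := by
  have h := V.s_uniq f Z m e hm he hc
  obtain ⟨h1, h2⟩ := Sigma.mk.inj_iff.mp h
  subst h1
  obtain ⟨h3, h4⟩ := Prod.mk_inj.mp (eq_of_heq h2)
  exact ⟨rfl, heq_of_eq h3, heq_of_eq h4⟩

lemma te_of_E {X Y : C} (f : X ⟶ Y) (h : V.E f) : HEq (V.te f) f :=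
  ((V.t_split f f (𝟙 Y) h (V.M_id Y) (Category.comp_id f)).2.1).symm

lemma tm_of_E {X Y : C} (f : X ⟶ Y) (h : V.E f) : HEq (V.tm f) (𝟙 Y) :=
  ((V.t_split f f (𝟙 Y) h (V.M_id Y) (Category.comp_id f)).2.2).symm

lemma te_of_M {X Y : C} (f : X ⟶ Y) (h : V.M f) : HEq (V.te f) (𝟙 X) :=
  ((V.t_split f (𝟙 X) f (V.E_id X) h (Category.id_comp f)).2.1).symm

lemma tm_of_M {X Y : C} (f : X ⟶ Y) (h : V.M f) : HEq (V.tm f) f :=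
  ((V.t_split f (𝟙 X) f (V.E_id X) h (Category.id_comp f)).2.2).symm

lemma sm_of_M {X Y : C} (f : X ⟶ Y) (h : V.M f) : HEq (V.sm f) f :=
  ((V.s_split f f (𝟙 Y) h (V.E_id Y) (Category.comp_id f)).2.1).symm

lemma se_of_M {X Y : C} (f : X ⟶ Y) (h : V.M f) : HEq (V.se f) (𝟙 Y) :=
  ((V.s_split f f (𝟙 Y) h (V.E_id Y) (Category.comp_id f)).2.2).symm

lemma sm_of_E {X Y : C} (f : X ⟶ Y) (h : V.E f) : HEq (V.sm f) (𝟙 X) :=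
  ((V.s_split f (𝟙 X) f (V.M_id X) h (Category.id_comp f)).2.1).symm

lemma se_of_E {X Y : C} (f : X ⟶ Y) (h : V.E f) : HEq (V.se f) f :=
  ((V.s_split f (𝟙 X) f (V.M_id X) h (Category.id_comp f)).2.2).symm

lemma sObj_congr {X Y X' Y' : C} {f : X ⟶ Y} {f' : X' ⟶ Y'}
    (hX : X = X') (hY : Y = Y') (hf : HEq f f') : V.sObj f = V.sObj f' := by
  subst hX; subst hY; rw [eq_of_heq hf]

lemma tObj_congr {X Y X' Y' : C} {f : X ⟶ Y} {f' : X' ⟶ Y'}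
    (hX : X = X') (hY : Y = Y') (hf : HEq f f') : V.tObj f = V.tObj f' := by
  subst hX; subst hY; rw [eq_of_heq hf]

lemma te_congr {X Y X' Y' : C} {f : X ⟶ Y} {f' : X' ⟶ Y'}
    (hX : X = X') (hY : Y = Y') (hf : HEq f f') : HEq (V.te f) (V.te f') := by
  subst hX; subst hY; rw [eq_of_heq hf]

lemma tm_congr {X Y X' Y' : C} {f : X ⟶ Y} {f' : X' ⟶ Y'}
    (hX : X = X') (hY : Y = Y') (hf : HEq f f') : HEq (V.tm f) (V.tm f') := by
  subst hX; subst hY; rw [eq_of_heq hf]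

lemma E_congr {X Y X' Y' : C} {f : X ⟶ Y} {f' : X' ⟶ Y'}
    (hX : X = X') (hY : Y = Y') (hf : HEq f f') : V.E f ↔ V.E f' := by
  subst hX; subst hY; rw [eq_of_heq hf]

lemma M_congr {X Y X' Y' : C} {f : X ⟶ Y} {f' : X' ⟶ Y'}
    (hX : X = X') (hY : Y = Y') (hf : HEq f f') : V.M f ↔ V.M f' := by
  subst hX; subst hY; rw [eq_of_heq hf]

end Variance

namespace Variance

variable {C : Type u} [Category.{v} C] (V : Variance C)

lemma sm_congr {X Y X' Y' : C} {f : X ⟶ Y} {f' : X' ⟶ Y'}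
    (hX : X = X') (hY : Y = Y') (hf : HEq f f') : HEq (V.sm f) (V.sm f') := by
  subst hX; subst hY; rw [eq_of_heq hf]

lemma se_congr {X Y X' Y' : C} {f : X ⟶ Y} {f' : X' ⟶ Y'}
    (hX : X = X') (hY : Y = Y') (hf : HEq f f') : HEq (V.se f) (V.se f') := by
  subst hX; subst hY; rw [eq_of_heq hf]

end Variance

namespace VFunctor

variable {C : Type u} [Category.{v} C] {V : Variance C}
variable {D : Type u₂} [Category.{v₂} D] (F : VFunctor V D)

/-- Normalized action on `E`-morphisms. -/
def emap {X Y : C} (e : X ⟶ Y) (he : V.E e) : F.obj X ⟶ F.obj Y :=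
  eqToHom (congrArg F.obj (V.sObj_of_E e he).symm) ≫ F.map e ≫
    eqToHom (congrArg F.obj (V.tObj_of_E e he))

/-- Normalized (contravariant) action on `M`-morphisms. -/
def mmap {X Y : C} (m : X ⟶ Y) (hm : V.M m) : F.obj Y ⟶ F.obj X :=
  eqToHom (congrArg F.obj (V.sObj_of_M m hm).symm) ≫ F.map m ≫
    eqToHom (congrArg F.obj (V.tObj_of_M m hm))

lemma map_eq_of_E {X Y : C} (e : X ⟶ Y) (he : V.E e) :
    F.map e = eqToHom (congrArg F.obj (V.sObj_of_E e he)) ≫ F.emap e he ≫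
      eqToHom (congrArg F.obj (V.tObj_of_E e he).symm) := by
  simp [emap]

lemma map_eq_of_M {X Y : C} (m : X ⟶ Y) (hm : V.M m) :
    F.map m = eqToHom (congrArg F.obj (V.sObj_of_M m hm)) ≫ F.mmap m hm ≫
      eqToHom (congrArg F.obj (V.tObj_of_M m hm).symm) := by
  simp [mmap]

lemma map_congr {X Y X' Y' : C} (f : X ⟶ Y) (f' : X' ⟶ Y')
    (hX : X = X') (hY : Y = Y') (hf : HEq f f') :
    F.map f = eqToHom (congrArg F.obj (V.sObj_congr hX hY hf)) ≫ F.map f' ≫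
      eqToHom (congrArg F.obj (V.tObj_congr hX hY hf).symm) := by
  subst hX; subst hY; cases (eq_of_heq hf); simp

lemma emap_congr {X Y X' Y' : C} (e : X ⟶ Y) (e' : X' ⟶ Y')
    (hX : X = X') (hY : Y = Y') (hf : HEq e e') (he : V.E e) (he' : V.E e') :
    F.emap e he = eqToHom (congrArg F.obj hX) ≫ F.emap e' he' ≫
      eqToHom (congrArg F.obj hY.symm) := by
  subst hX; subst hY; cases (eq_of_heq hf); simp

lemma mmap_congr {X Y X' Y' : C} (m : X ⟶ Y) (m' : X' ⟶ Y')
    (hX : X = X') (hY : Y = Y') (hf : HEq m m') (hm : V.M m) (hm' : V.M m') :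
    F.mmap m hm = eqToHom (congrArg F.obj hY) ≫ F.mmap m' hm' ≫
      eqToHom (congrArg F.obj hX.symm) := by
  subst hX; subst hY; cases (eq_of_heq hf); simp

@[simp] lemma emap_id (X : C) (h : V.E (𝟙 X)) : F.emap (𝟙 X) h = 𝟙 (F.obj X) := by
  simp [emap, F.map_id]

@[simp] lemma mmap_id (X : C) (h : V.M (𝟙 X)) : F.mmap (𝟙 X) h = 𝟙 (F.obj X) := by
  simp [mmap, F.map_id]

lemma emap_comp {X Y Z : C} (e : X ⟶ Y) (e' : Y ⟶ Z) (he : V.E e) (he' : V.E e') :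
    F.emap (e ≫ e') (V.E_comp e e' he he') = F.emap e he ≫ F.emap e' he' := by
  have hk : HEq (V.se e ≫ V.sm e') e :=
    (comp_heq (V.sObj_of_E e he) rfl (V.sObj_of_E e' he')
      (V.se_of_E e he) (V.sm_of_E e' he')).trans (heq_of_eq (Category.comp_id e))
  have hsm : HEq (V.sm (V.se e ≫ V.sm e')) (𝟙 X) :=
    (V.sm_congr (V.sObj_of_E e he) (V.sObj_of_E e' he') hk).trans (V.sm_of_E e he)
  have hl : HEq (V.tm e ≫ V.te e') e' :=
    (comp_heq (V.tObj_of_E e he) rfl (V.tObj_of_E e' he')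
      (V.tm_of_E e he) (V.te_of_E e' he')).trans (heq_of_eq (Category.id_comp e'))
  have hte : HEq (V.te (V.tm e ≫ V.te e')) e' :=
    (V.te_congr (V.tObj_of_E e he) (V.tObj_of_E e' he') hl).trans (V.te_of_E e' he')
  rw [emap, F.map_comp₁ e e',
    F.map_congr (V.sm (V.se e ≫ V.sm e')) (𝟙 X) (V.sObj_of_E e he)
      ((V.sObj_congr (V.sObj_of_E e he) (V.sObj_of_E e' he') hk).trans
        (V.sObj_of_E e he)) hsm,
    F.map_congr (V.te (V.tm e ≫ V.te e')) e' (V.tObj_of_E e he)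
      ((V.tObj_congr (V.tObj_of_E e he) (V.tObj_of_E e' he') hl).trans
        (V.tObj_of_E e' he')) hte,
    F.map_id, F.map_eq_of_E e he, F.map_eq_of_E e' he']
  simp [eqToHom_trans]

lemma mmap_comp {X Y Z : C} (m : X ⟶ Y) (m' : Y ⟶ Z) (hm : V.M m) (hm' : V.M m') :
    F.mmap (m ≫ m') (V.M_comp m m' hm hm') = F.mmap m' hm' ≫ F.mmap m hm := by
  have hk : HEq (V.se m ≫ V.sm m') m' :=
    (comp_heq (V.sObj_of_M m hm) rfl (V.sObj_of_M m' hm')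
      (V.se_of_M m hm) (V.sm_of_M m' hm')).trans (heq_of_eq (Category.id_comp m'))
  have hse : HEq (V.se (V.se m ≫ V.sm m')) (𝟙 Z) :=
    (V.se_congr (V.sObj_of_M m hm) (V.sObj_of_M m' hm') hk).trans (V.se_of_M m' hm')
  have hl : HEq (V.tm m ≫ V.te m') m :=
    (comp_heq (V.tObj_of_M m hm) rfl (V.tObj_of_M m' hm')
      (V.tm_of_M m hm) (V.te_of_M m' hm')).trans (heq_of_eq (Category.comp_id m))
  have htm : HEq (V.tm (V.tm m ≫ V.te m')) m :=
    (V.tm_congr (V.tObj_of_M m hm) (V.tObj_of_M m' hm') hl).trans (V.tm_of_M m hm)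
  rw [mmap, F.map_comp₂ m m',
    F.map_congr (V.se (V.se m ≫ V.sm m')) (𝟙 Z)
      ((V.sObj_congr (V.sObj_of_M m hm) (V.sObj_of_M m' hm') hk).trans
        (V.sObj_of_M m' hm')) (V.sObj_of_M m' hm') hse,
    F.map_congr (V.tm (V.tm m ≫ V.te m')) m
      ((V.tObj_congr (V.tObj_of_M m hm) (V.tObj_of_M m' hm') hl).trans
        (V.tObj_of_M m hm)) (V.tObj_of_M m' hm') htm,
    F.map_id, F.map_eq_of_M m hm, F.map_eq_of_M m' hm']
  simp [eqToHom_trans]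

lemma square {X Y Z : C} (f : X ⟶ Y) (g : Y ⟶ Z) (hf : V.M f) (hg : V.E g) :
    F.emap g hg ≫ F.mmap (V.tm (f ≫ g)) (V.tm_mem _) =
      F.mmap f hf ≫ F.emap (V.te (f ≫ g)) (V.te_mem _) := by
  have hk : HEq (V.se f ≫ V.sm g) (𝟙 Y) :=
    (comp_heq (V.sObj_of_M f hf) rfl (V.sObj_of_E g hg)
      (V.se_of_M f hf) (V.sm_of_E g hg)).trans (heq_of_eq (Category.comp_id (𝟙 Y)))
  have hkY : V.sObj (V.se f ≫ V.sm g) = Y :=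
    ((V.sObj_congr (V.sObj_of_M f hf) (V.sObj_of_E g hg) hk).trans (V.sObj_id Y))
  have hA : V.sObj (f ≫ g) = Y := (V.sObj_comp f g).trans hkY
  have hl : HEq (V.tm f ≫ V.te g) (f ≫ g) :=
    comp_heq (V.tObj_of_M f hf) rfl (V.tObj_of_E g hg) (V.tm_of_M f hf) (V.te_of_E g hg)
  have h1 : F.map (f ≫ g) =
      eqToHom (congrArg F.obj hA) ≫ F.mmap f hf ≫
        F.emap (V.te (f ≫ g)) (V.te_mem _) := by
    have hsm : HEq (V.sm (V.se f ≫ V.sm g)) (𝟙 Y) :=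
      (V.sm_congr (V.sObj_of_M f hf) (V.sObj_of_E g hg) hk).trans
        (V.sm_of_E (𝟙 Y) (V.E_id Y))
    have hte : HEq (V.te (V.tm f ≫ V.te g)) (V.te (f ≫ g)) :=
      V.te_congr (V.tObj_of_M f hf) (V.tObj_of_E g hg) hl
    rw [F.map_comp₁ f g,
      F.map_congr (V.sm (V.se f ≫ V.sm g)) (𝟙 Y) (V.sObj_of_M f hf) hkY hsm,
      F.map_congr (V.te (V.tm f ≫ V.te g)) (V.te (f ≫ g)) (V.tObj_of_M f hf)
        (V.tObj_comp f g).symm hte,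
      F.map_id, F.map_eq_of_M f hf, F.map_eq_of_E (V.te (f ≫ g)) (V.te_mem _)]
    simp [eqToHom_trans]
  have h2 : F.map (f ≫ g) =
      eqToHom (congrArg F.obj hA) ≫ F.emap g hg ≫
        F.mmap (V.tm (f ≫ g)) (V.tm_mem _) := by
    have hse : HEq (V.se (V.se f ≫ V.sm g)) (𝟙 Y) :=
      (V.se_congr (V.sObj_of_M f hf) (V.sObj_of_E g hg) hk).trans
        (V.se_of_E (𝟙 Y) (V.E_id Y))
    have htm : HEq (V.tm (V.tm f ≫ V.te g)) (V.tm (f ≫ g)) :=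
      V.tm_congr (V.tObj_of_M f hf) (V.tObj_of_E g hg) hl
    rw [F.map_comp₂ f g,
      F.map_congr (V.se (V.se f ≫ V.sm g)) (𝟙 Y) hkY (V.sObj_of_E g hg) hse,
      F.map_congr (V.tm (V.tm f ≫ V.te g)) (V.tm (f ≫ g))
        (V.tObj_comp f g).symm (V.tObj_of_E g hg) htm,
      F.map_id, F.map_eq_of_E g hg, F.map_eq_of_M (V.tm (f ≫ g)) (V.tm_mem _)]
    simp [eqToHom_trans]
  exact (cancel_epi (eqToHom (congrArg F.obj hA))).1 (h2.symm.trans h1)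

end VFunctor


namespace VFunctor

variable {C : Type u} [Category.{v} C] {V : Variance C}
variable {D : Type u₂} [Category.{v₂} D] (F : VFunctor V D)

lemma emap_comp' {X Y Z : C} (e : X ⟶ Y) (e' : Y ⟶ Z) (e'' : X ⟶ Z)
    (hc : e'' = e ≫ e') (he : V.E e) (he' : V.E e') (he'' : V.E e'') :
    F.emap e'' he'' = F.emap e he ≫ F.emap e' he' := by
  subst hc; exact F.emap_comp e e' he he'

lemma mmap_comp' {X Y Z : C} (m : X ⟶ Y) (m' : Y ⟶ Z) (m'' : X ⟶ Z)
    (hc : m'' = m ≫ m') (hm : V.M m) (hm' : V.M m') (hm'' : V.M m'') :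
    F.mmap m'' hm'' = F.mmap m' hm' ≫ F.mmap m hm := by
  subst hc; exact F.mmap_comp m m' hm hm'

end VFunctor

section ProdKit

variable {A : Type u} [Category.{v} A] {B : Type u} [Category.{v} B]
variable (VA : Variance A) (VB : Variance B) (Vp : Variance (A × B))

lemma pair_heq {a a' u : A} {b b' v : B} {f₁ : a ⟶ a'} {g₁ : a ⟶ u}
    {f₂ : b ⟶ b'} {g₂ : b ⟶ v} (h1 : u = a') (h2 : v = b')
    (hf : HEq g₁ f₁) (hg : HEq g₂ f₂) :
    HEq ((g₁, g₂) : ((a, b) : A × B) ⟶ (u, v)) ((f₁, f₂) : ((a, b) : A × B) ⟶ (a', b')) := by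
  subst h1; subst h2; rw [eq_of_heq hf, eq_of_heq hg]

lemma pair_heq' {a a' u : A} {b b' v : B} {f₁ : a ⟶ a'} {g₁ : u ⟶ a'}
    {f₂ : b ⟶ b'} {g₂ : v ⟶ b'} (h1 : u = a) (h2 : v = b)
    (hf : HEq g₁ f₁) (hg : HEq g₂ f₂) :
    HEq ((g₁, g₂) : ((u, v) : A × B) ⟶ (a', b')) ((f₁, f₂) : ((a, b) : A × B) ⟶ (a', b')) := by
  subst h1; subst h2; rw [eq_of_heq hf, eq_of_heq hg]

lemma prod_te
    (hE : ∀ {p q : A × B} (φ : p ⟶ q), Vp.E φ ↔ VA.E φ.1 ∧ VB.E φ.2)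
    (hM : ∀ {p q : A × B} (φ : p ⟶ q), Vp.M φ ↔ VA.M φ.1 ∧ VB.M φ.2)
    {a a' : A} {b b' : B} (φ₁ : a ⟶ a') (φ₂ : b ⟶ b') :
    HEq (Vp.te ((φ₁, φ₂) : ((a, b) : A × B) ⟶ (a', b')))
      ((VA.te φ₁, VB.te φ₂) : ((a, b) : A × B) ⟶ (VA.tObj φ₁, VB.tObj φ₂)) :=
  ((Vp.t_split ((φ₁, φ₂) : ((a, b) : A × B) ⟶ (a', b'))
    ((VA.te φ₁, VB.te φ₂) : ((a, b) : A × B) ⟶ (VA.tObj φ₁, VB.tObj φ₂))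
    ((VA.tm φ₁, VB.tm φ₂) : ((VA.tObj φ₁, VB.tObj φ₂) : A × B) ⟶ (a', b'))
    ((hE _).2 ⟨VA.te_mem φ₁, VB.te_mem φ₂⟩)
    ((hM _).2 ⟨VA.tm_mem φ₁, VB.tm_mem φ₂⟩)
    (Prod.ext (by simpa using VA.t_fac φ₁) (by simpa using VB.t_fac φ₂))).2.1).symm

lemma prod_tm
    (hE : ∀ {p q : A × B} (φ : p ⟶ q), Vp.E φ ↔ VA.E φ.1 ∧ VB.E φ.2)
    (hM : ∀ {p q : A × B} (φ : p ⟶ q), Vp.M φ ↔ VA.M φ.1 ∧ VB.M φ.2)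
    {a a' : A} {b b' : B} (φ₁ : a ⟶ a') (φ₂ : b ⟶ b') :
    HEq (Vp.tm ((φ₁, φ₂) : ((a, b) : A × B) ⟶ (a', b')))
      ((VA.tm φ₁, VB.tm φ₂) : ((VA.tObj φ₁, VB.tObj φ₂) : A × B) ⟶ (a', b')) :=
  ((Vp.t_split ((φ₁, φ₂) : ((a, b) : A × B) ⟶ (a', b'))
    ((VA.te φ₁, VB.te φ₂) : ((a, b) : A × B) ⟶ (VA.tObj φ₁, VB.tObj φ₂))
    ((VA.tm φ₁, VB.tm φ₂) : ((VA.tObj φ₁, VB.tObj φ₂) : A × B) ⟶ (a', b'))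
    ((hE _).2 ⟨VA.te_mem φ₁, VB.te_mem φ₂⟩)
    ((hM _).2 ⟨VA.tm_mem φ₁, VB.tm_mem φ₂⟩)
    (Prod.ext (by simpa using VA.t_fac φ₁) (by simpa using VB.t_fac φ₂))).2.2).symm

end ProdKit

structure FSetup {A : Type u} [Category.{v} A] {B : Type u} [Category.{v} B]
    (CC : Type u₂) [Category.{v₂} CC]
    {R₁ : Type u₃} [Category.{v₃} R₁] {R₂ : Type u₃} [Category.{v₃} R₂]
    (VA : Variance A) (VB : Variance B) (Vp : Variance (A × B))
    (L₁ : R₁ ⥤ A) (L₂ : R₂ ⥤ B) where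
  hE : ∀ {p q : A × B} (φ : p ⟶ q), Vp.E φ ↔ VA.E φ.1 ∧ VB.E φ.2
  hM : ∀ {p q : A × B} (φ : p ⟶ q), Vp.M φ ↔ VA.M φ.1 ∧ VB.M φ.2
  hsp : ∀ {p q : A × B} (φ : p ⟶ q), Vp.sObj φ = (VA.sObj φ.1, VB.sObj φ.2)
  htp : ∀ {p q : A × B} (φ : p ⟶ q), Vp.tObj φ = (VA.tObj φ.1, VB.tObj φ.2)
  F : VFunctor Vp CC
  Fb : B → VFunctor VA CC
  hFobj : ∀ (a : A) (b : B), (Fb b).obj a = F.obj (a, b)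
  hFmap : ∀ {a a' : A} (f : a ⟶ a') (b : B),
      (Fb b).map f =
        eqToHom (by rw [hFobj, hsp ((f, 𝟙 b) : (a, b) ⟶ (a', b)), VB.sObj_id]) ≫
          F.map ((f, 𝟙 b) : (a, b) ⟶ (a', b)) ≫
          eqToHom (by rw [hFobj, htp ((f, 𝟙 b) : (a, b) ⟶ (a', b)), VB.tObj_id])
  W : ∀ b : B, Wedge VA (Fb b) L₁
  hW : ∀ b : B, Nonempty (CategoryTheory.Limits.IsTerminal (W b))
  G : VFunctor VB CC
  hGobj : ∀ b : B, G.obj b = (W b).pt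
  hGmap : ∀ (a : R₁) {b b' : B} (g : b ⟶ b'),
      eqToHom (hGobj (VB.sObj g)).symm ≫ G.map g ≫ eqToHom (hGobj (VB.tObj g)) ≫
          (W (VB.tObj g)).η a =
        (W (VB.sObj g)).η a ≫
          eqToHom (by
            rw [hFobj, hsp ((𝟙 (L₁.obj a), g) : (L₁.obj a, b) ⟶ (L₁.obj a, b')),
              VA.sObj_id]) ≫
          F.map ((𝟙 (L₁.obj a), g) : (L₁.obj a, b) ⟶ (L₁.obj a, b')) ≫
          eqToHom (by
            rw [hFobj, htp ((𝟙 (L₁.obj a), g) : (L₁.obj a, b) ⟶ (L₁.obj a, b')),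
              VA.tObj_id])

namespace FSetup

variable {A : Type u} [Category.{v} A] {B : Type u} [Category.{v} B]
    {CC : Type u₂} [Category.{v₂} CC]
    {R₁ : Type u₃} [Category.{v₃} R₁] {R₂ : Type u₃} [Category.{v₃} R₂]
    {VA : Variance A} {VB : Variance B} {Vp : Variance (A × B)}
    {L₁ : R₁ ⥤ A} {L₂ : R₂ ⥤ B}
    (S : FSetup CC VA VB Vp L₁ L₂)

lemma Wcongr {b₁ b₂ : B} (h : b₁ = b₂) (a : R₁) :
    (S.W b₁).η a = eqToHom (congrArg (fun c => (S.W c).pt) h) ≫ (S.W b₂).η a ≫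
      eqToHom (congrArg (fun c => (S.Fb c).obj (L₁.obj a)) h.symm) := by
  subst h; simp

include S in
lemma pfE₁ {a a' : A} (e : a ⟶ a') (he : VA.E e) (b : B) :
    Vp.E ((e, 𝟙 b) : ((a, b) : A × B) ⟶ (a', b)) := (S.hE _).2 ⟨he, VB.E_id b⟩

include S in
lemma pfE₂ {b b' : B} (e : b ⟶ b') (he : VB.E e) (a : A) :
    Vp.E ((𝟙 a, e) : ((a, b) : A × B) ⟶ (a, b')) := (S.hE _).2 ⟨VA.E_id a, he⟩

include S in
lemma pfM₁ {a a' : A} (m : a ⟶ a') (hm : VA.M m) (b : B) :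
    Vp.M ((m, 𝟙 b) : ((a, b) : A × B) ⟶ (a', b)) := (S.hM _).2 ⟨hm, VB.M_id b⟩

include S in
lemma pfM₂ {b b' : B} (m : b ⟶ b') (hm : VB.M m) (a : A) :
    Vp.M ((𝟙 a, m) : ((a, b) : A × B) ⟶ (a, b')) := (S.hM _).2 ⟨VA.M_id a, hm⟩

include S in
lemma pfE {a a' : A} {b b' : B} (e₁ : a ⟶ a') (e₂ : b ⟶ b')
    (h1 : VA.E e₁) (h2 : VB.E e₂) :
    Vp.E ((e₁, e₂) : ((a, b) : A × B) ⟶ (a', b')) := (S.hE _).2 ⟨h1, h2⟩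

include S in
lemma pfM {a a' : A} {b b' : B} (m₁ : a ⟶ a') (m₂ : b ⟶ b')
    (h1 : VA.M m₁) (h2 : VB.M m₂) :
    Vp.M ((m₁, m₂) : ((a, b) : A × B) ⟶ (a', b')) := (S.hM _).2 ⟨h1, h2⟩

lemma KFE {a a' : A} (e : a ⟶ a') (he : VA.E e) (b : B) :
    (S.Fb b).emap e he = eqToHom (S.hFobj a b) ≫
      S.F.emap ((e, 𝟙 b)) (S.pfE₁ e he b) ≫ eqToHom (S.hFobj a' b).symm := by
  simp only [VFunctor.emap, S.hFmap e b]
  simp [eqToHom_trans]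

lemma KFM {a a' : A} (m : a ⟶ a') (hm : VA.M m) (b : B) :
    (S.Fb b).mmap m hm = eqToHom (S.hFobj a' b) ≫
      S.F.mmap ((m, 𝟙 b)) (S.pfM₁ m hm b) ≫ eqToHom (S.hFobj a b).symm := by
  simp only [VFunctor.mmap, S.hFmap m b]
  simp [eqToHom_trans]

lemma KGE {b b' : B} (e : b ⟶ b') (he : VB.E e) (a : R₁) :
    S.G.emap e he ≫ eqToHom (S.hGobj b') ≫ (S.W b').η a ≫
        eqToHom (S.hFobj (L₁.obj a) b') =
      eqToHom (S.hGobj b) ≫ (S.W b).η a ≫ eqToHom (S.hFobj (L₁.obj a) b) ≫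
        S.F.emap ((𝟙 (L₁.obj a), e)) (S.pfE₂ e he (L₁.obj a)) := by
  have h := S.hGmap a e
  rw [S.G.map_eq_of_E e he,
    S.F.map_eq_of_E ((𝟙 (L₁.obj a), e) : (L₁.obj a, b) ⟶ (L₁.obj a, b'))
      (S.pfE₂ e he (L₁.obj a)),
    S.Wcongr (VB.sObj_of_E e he) a, S.Wcongr (VB.tObj_of_E e he) a] at h
  rw [← cancel_epi (eqToHom ((S.hGobj (VB.sObj e)).symm.trans
      (congrArg S.G.obj (VB.sObj_of_E e he)))),
    ← cancel_mono (eqToHom ((S.hFobj (L₁.obj a) b').symm.trans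
      (congrArg (fun c => (S.Fb c).obj (L₁.obj a)) (VB.tObj_of_E e he).symm)))]
  simp only [Category.assoc, eqToHom_trans, eqToHom_trans_assoc, eqToHom_eq_id,
    Category.id_comp, Category.comp_id] at h ⊢
  exact h

lemma KGM {b b' : B} (m : b ⟶ b') (hm : VB.M m) (a : R₁) :
    S.G.mmap m hm ≫ eqToHom (S.hGobj b) ≫ (S.W b).η a ≫
        eqToHom (S.hFobj (L₁.obj a) b) =
      eqToHom (S.hGobj b') ≫ (S.W b').η a ≫ eqToHom (S.hFobj (L₁.obj a) b') ≫
        S.F.mmap ((𝟙 (L₁.obj a), m)) (S.pfM₂ m hm (L₁.obj a)) := by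
  have h := S.hGmap a m
  rw [S.G.map_eq_of_M m hm,
    S.F.map_eq_of_M ((𝟙 (L₁.obj a), m) : (L₁.obj a, b) ⟶ (L₁.obj a, b'))
      (S.pfM₂ m hm (L₁.obj a)),
    S.Wcongr (VB.sObj_of_M m hm) a, S.Wcongr (VB.tObj_of_M m hm) a] at h
  rw [← cancel_epi (eqToHom ((S.hGobj (VB.sObj m)).symm.trans
      (congrArg S.G.obj (VB.sObj_of_M m hm)))),
    ← cancel_mono (eqToHom ((S.hFobj (L₁.obj a) b).symm.trans
      (congrArg (fun c => (S.Fb c).obj (L₁.obj a)) (VB.tObj_of_M m hm).symm)))]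
  simp only [Category.assoc, eqToHom_trans, eqToHom_trans_assoc, eqToHom_eq_id,
    Category.id_comp, Category.comp_id] at h ⊢
  exact h

end FSetup

section WedgeKit

variable {A : Type u} [Category.{v} A] {CC : Type u₂} [Category.{v₂} CC]
    {V : Variance A} {F : VFunctor V CC} {R : Type u₃} [Category.{v₃} R] {L : R ⥤ A}

lemma Wedge.nat' (Wd : Wedge V F L) {x y : R} (f : x ⟶ y) :
    Wd.η x ≫ F.emap (V.te (L.map f)) (V.te_mem _) =
      Wd.η y ≫ F.mmap (V.tm (L.map f)) (V.tm_mem _) := by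
  simpa [VFunctor.emap, VFunctor.mmap] using Wd.nat f

def mkWedge (pt : CC) (η : ∀ x : R, pt ⟶ F.obj (L.obj x))
    (h : ∀ {x y : R} (f : x ⟶ y),
      η x ≫ F.emap (V.te (L.map f)) (V.te_mem _) =
        η y ≫ F.mmap (V.tm (L.map f)) (V.tm_mem _)) : Wedge V F L :=
  ⟨pt, η, fun f => by simpa [VFunctor.emap, VFunctor.mmap] using h f⟩

attribute [reducible] mkWedge

@[simp] lemma mkWedge_pt (pt η h) : (mkWedge (V := V) (F := F) (L := L) pt η h).pt = pt := rfl
@[simp] lemma mkWedge_η (pt η h) (x : R) :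
    (mkWedge (V := V) (F := F) (L := L) pt η h).η x = η x := rfl

end WedgeKit

namespace FSetup

variable {A : Type u} [Category.{v} A] {B : Type u} [Category.{v} B]
    {CC : Type u₂} [Category.{v₂} CC]
    {R₁ : Type u₃} [Category.{v₃} R₁] {R₂ : Type u₃} [Category.{v₃} R₂]
    {VA : Variance A} {VB : Variance B} {Vp : Variance (A × B)}
    {L₁ : R₁ ⥤ A} {L₂ : R₂ ⥤ B}
    (S : FSetup CC VA VB Vp L₁ L₂)

include S in
lemma tpair_eq {x x' : R₁} {y y' : R₂} (f : x ⟶ x') (g : y ⟶ y') :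
    Vp.tObj ((L₁.prod L₂).map ((f, g) : (x, y) ⟶ (x', y'))) =
      (VA.tObj (L₁.map f), VB.tObj (L₂.map g)) :=
  (S.htp _).trans rfl

lemma omega_nat_iff (pt : CC) (η : ∀ p : R₁ × R₂, pt ⟶ S.F.obj ((L₁.prod L₂).obj p))
    {x x' : R₁} {y y' : R₂} (f : x ⟶ x') (g : y ⟶ y') :
    (η (x, y) ≫ S.F.emap (Vp.te ((L₁.prod L₂).map ((f, g) : (x, y) ⟶ (x', y'))))
        (Vp.te_mem _) =
      η (x', y') ≫ S.F.mmap (Vp.tm ((L₁.prod L₂).map ((f, g) : (x, y) ⟶ (x', y'))))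
        (Vp.tm_mem _)) ↔
    (η (x, y) ≫ S.F.emap
        ((VA.te (L₁.map f), VB.te (L₂.map g)) :
          ((L₁.obj x, L₂.obj y) : A × B) ⟶ (VA.tObj (L₁.map f), VB.tObj (L₂.map g)))
        (S.pfE _ _ (VA.te_mem _) (VB.te_mem _)) =
      η (x', y') ≫ S.F.mmap
        ((VA.tm (L₁.map f), VB.tm (L₂.map g)) :
          ((VA.tObj (L₁.map f), VB.tObj (L₂.map g)) : A × B) ⟶ (L₁.obj x', L₂.obj y'))
        (S.pfM _ _ (VA.tm_mem _) (VB.tm_mem _))) := by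
  rw [show (L₁.prod L₂).map ((f, g) : (x, y) ⟶ (x', y')) =
      ((L₁.map f, L₂.map g) :
        ((L₁.obj x, L₂.obj y) : A × B) ⟶ (L₁.obj x', L₂.obj y')) from rfl,
    S.F.emap_congr (Vp.te ((L₁.map f, L₂.map g) :
        ((L₁.obj x, L₂.obj y) : A × B) ⟶ (L₁.obj x', L₂.obj y')))
      ((VA.te (L₁.map f), VB.te (L₂.map g))) rfl ((S.htp _).trans rfl)
      (prod_te VA VB Vp S.hE S.hM (L₁.map f) (L₂.map g)) (Vp.te_mem _)
      (S.pfE _ _ (VA.te_mem _) (VB.te_mem _)),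
    S.F.mmap_congr (Vp.tm ((L₁.map f, L₂.map g) :
        ((L₁.obj x, L₂.obj y) : A × B) ⟶ (L₁.obj x', L₂.obj y')))
      ((VA.tm (L₁.map f), VB.tm (L₂.map g))) ((S.htp _).trans rfl) rfl
      (prod_tm VA VB Vp S.hE S.hM (L₁.map f) (L₂.map g)) (Vp.tm_mem _)
      (S.pfM _ _ (VA.tm_mem _) (VB.tm_mem _))]
  simp only [eqToHom_eq_id, Category.id_comp, ← Category.assoc]
  exact cancel_mono _

lemma omega_row (Ω : Wedge Vp S.F (L₁.prod L₂)) {x x' : R₁} (f : x ⟶ x') (y : R₂) :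
    Ω.η (x, y) ≫ S.F.emap
        ((VA.te (L₁.map f), 𝟙 (L₂.obj y)) :
          ((L₁.obj x, L₂.obj y) : A × B) ⟶ (VA.tObj (L₁.map f), L₂.obj y))
        (S.pfE₁ _ (VA.te_mem _) _) =
      Ω.η (x', y) ≫ S.F.mmap
        ((VA.tm (L₁.map f), 𝟙 (L₂.obj y)) :
          ((VA.tObj (L₁.map f), L₂.obj y) : A × B) ⟶ (L₁.obj x', L₂.obj y))
        (S.pfM₁ _ (VA.tm_mem _) _) := by
  have h := (S.omega_nat_iff Ω.pt Ω.η f (𝟙 y)).1 (Ω.nat' ((f, 𝟙 y) : (x, y) ⟶ (x', y)))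
  rw [L₂.map_id] at h
  rw [S.F.emap_congr ((VA.te (L₁.map f), VB.te (𝟙 (L₂.obj y))) :
        ((L₁.obj x, L₂.obj y) : A × B) ⟶ (VA.tObj (L₁.map f), VB.tObj (𝟙 (L₂.obj y))))
      ((VA.te (L₁.map f), 𝟙 (L₂.obj y)) :
        ((L₁.obj x, L₂.obj y) : A × B) ⟶ (VA.tObj (L₁.map f), L₂.obj y)) rfl
      (Prod.ext rfl (VB.tObj_id _))
      (pair_heq rfl (VB.tObj_id _) HEq.rfl (VB.te_of_E _ (VB.E_id _)))
      (S.pfE _ _ (VA.te_mem _) (VB.te_mem _)) (S.pfE₁ _ (VA.te_mem _) _),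
    S.F.mmap_congr ((VA.tm (L₁.map f), VB.tm (𝟙 (L₂.obj y))) :
        ((VA.tObj (L₁.map f), VB.tObj (𝟙 (L₂.obj y))) : A × B) ⟶ (L₁.obj x', L₂.obj y))
      ((VA.tm (L₁.map f), 𝟙 (L₂.obj y)) :
        ((VA.tObj (L₁.map f), L₂.obj y) : A × B) ⟶ (L₁.obj x', L₂.obj y))
      (Prod.ext rfl (VB.tObj_id _)) rfl
      (pair_heq' rfl (VB.tObj_id _) HEq.rfl (VB.tm_of_E _ (VB.E_id _)))
      (S.pfM _ _ (VA.tm_mem _) (VB.tm_mem _)) (S.pfM₁ _ (VA.tm_mem _) _)] at h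
  simp only [eqToHom_eq_id, Category.id_comp, ← Category.assoc] at h
  exact (cancel_mono _).1 h

lemma omega_col (Ω : Wedge Vp S.F (L₁.prod L₂)) (x : R₁) {y y' : R₂} (g : y ⟶ y') :
    Ω.η (x, y) ≫ S.F.emap
        ((𝟙 (L₁.obj x), VB.te (L₂.map g)) :
          ((L₁.obj x, L₂.obj y) : A × B) ⟶ (L₁.obj x, VB.tObj (L₂.map g)))
        (S.pfE₂ _ (VB.te_mem _) _) =
      Ω.η (x, y') ≫ S.F.mmap
        ((𝟙 (L₁.obj x), VB.tm (L₂.map g)) :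
          ((L₁.obj x, VB.tObj (L₂.map g)) : A × B) ⟶ (L₁.obj x, L₂.obj y'))
        (S.pfM₂ _ (VB.tm_mem _) _) := by
  have h := (S.omega_nat_iff Ω.pt Ω.η (𝟙 x) g).1 (Ω.nat' ((𝟙 x, g) : (x, y) ⟶ (x, y')))
  rw [L₁.map_id] at h
  rw [S.F.emap_congr ((VA.te (𝟙 (L₁.obj x)), VB.te (L₂.map g)) :
        ((L₁.obj x, L₂.obj y) : A × B) ⟶ (VA.tObj (𝟙 (L₁.obj x)), VB.tObj (L₂.map g)))
      ((𝟙 (L₁.obj x), VB.te (L₂.map g)) :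
        ((L₁.obj x, L₂.obj y) : A × B) ⟶ (L₁.obj x, VB.tObj (L₂.map g))) rfl
      (Prod.ext (VA.tObj_id _) rfl)
      (pair_heq (VA.tObj_id _) rfl (VA.te_of_E _ (VA.E_id _)) HEq.rfl)
      (S.pfE _ _ (VA.te_mem _) (VB.te_mem _)) (S.pfE₂ _ (VB.te_mem _) _),
    S.F.mmap_congr ((VA.tm (𝟙 (L₁.obj x)), VB.tm (L₂.map g)) :
        ((VA.tObj (𝟙 (L₁.obj x)), VB.tObj (L₂.map g)) : A × B) ⟶ (L₁.obj x, L₂.obj y'))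
      ((𝟙 (L₁.obj x), VB.tm (L₂.map g)) :
        ((L₁.obj x, VB.tObj (L₂.map g)) : A × B) ⟶ (L₁.obj x, L₂.obj y'))
      (Prod.ext (VA.tObj_id _) rfl) rfl
      (pair_heq' (VA.tObj_id _) rfl (VA.tm_of_E _ (VA.E_id _)) HEq.rfl)
      (S.pfM _ _ (VA.tm_mem _) (VB.tm_mem _)) (S.pfM₂ _ (VB.tm_mem _) _)] at h
  simp only [eqToHom_eq_id, Category.id_comp, ← Category.assoc] at h
  exact (cancel_mono _).1 h

lemma inter {u v : A} (m₁ : u ⟶ v) (hm₁ : VA.M m₁) {b b' : B} (e₂ : b ⟶ b')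
    (he₂ : VB.E e₂) :
    S.F.mmap ((m₁, 𝟙 b) : ((u, b) : A × B) ⟶ (v, b)) (S.pfM₁ m₁ hm₁ b) ≫
        S.F.emap ((𝟙 u, e₂) : ((u, b) : A × B) ⟶ (u, b')) (S.pfE₂ e₂ he₂ u) =
      S.F.emap ((𝟙 v, e₂) : ((v, b) : A × B) ⟶ (v, b')) (S.pfE₂ e₂ he₂ v) ≫
        S.F.mmap ((m₁, 𝟙 b') : ((u, b') : A × B) ⟶ (v, b')) (S.pfM₁ m₁ hm₁ b') := by
  have hfg : (((m₁, 𝟙 b) : ((u, b) : A × B) ⟶ (v, b)) ≫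
      ((𝟙 v, e₂) : ((v, b) : A × B) ⟶ (v, b')) : ((u, b) : A × B) ⟶ (v, b')) =
      ((m₁, e₂) : ((u, b) : A × B) ⟶ (v, b')) :=
    by rw [CategoryTheory.prod_comp]; simp
  have hs := S.F.square ((m₁, 𝟙 b) : ((u, b) : A × B) ⟶ (v, b))
    ((𝟙 v, e₂) : ((v, b) : A × B) ⟶ (v, b')) (S.pfM₁ m₁ hm₁ b) (S.pfE₂ e₂ he₂ v)
  rw [hfg] at hs
  have hT : Vp.tObj ((m₁, e₂) : ((u, b) : A × B) ⟶ (v, b')) = (u, b') := by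
    rw [S.htp ((m₁, e₂) : ((u, b) : A × B) ⟶ (v, b'))]
    exact Prod.ext (by simpa using VA.tObj_of_M m₁ hm₁) (by simpa using VB.tObj_of_E e₂ he₂)
  rw [S.F.emap_congr (Vp.te ((m₁, e₂) : ((u, b) : A × B) ⟶ (v, b')))
      ((𝟙 u, e₂) : ((u, b) : A × B) ⟶ (u, b')) rfl hT
      ((prod_te VA VB Vp S.hE S.hM m₁ e₂).trans
        (pair_heq (VA.tObj_of_M m₁ hm₁) (VB.tObj_of_E e₂ he₂)
          (VA.te_of_M m₁ hm₁) (VB.te_of_E e₂ he₂)))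
      (Vp.te_mem _) (S.pfE₂ e₂ he₂ u),
    S.F.mmap_congr (Vp.tm ((m₁, e₂) : ((u, b) : A × B) ⟶ (v, b')))
      ((m₁, 𝟙 b') : ((u, b') : A × B) ⟶ (v, b')) hT rfl
      ((prod_tm VA VB Vp S.hE S.hM m₁ e₂).trans
        (pair_heq' (VA.tObj_of_M m₁ hm₁) (VB.tObj_of_E e₂ he₂)
          (VA.tm_of_M m₁ hm₁) (VB.tm_of_E e₂ he₂)))
      (Vp.tm_mem _) (S.pfM₁ m₁ hm₁ b')] at hs
  simp only [eqToHom_eq_id, Category.id_comp, ← Category.assoc] at hs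
  have h2 := (cancel_mono _).1 hs
  exact h2.symm

lemma Wrow (b : B) {x x' : R₁} (f : x ⟶ x') :
    (S.W b).η x ≫ eqToHom (S.hFobj (L₁.obj x) b) ≫
        S.F.emap ((VA.te (L₁.map f), 𝟙 b) :
          ((L₁.obj x, b) : A × B) ⟶ (VA.tObj (L₁.map f), b))
          (S.pfE₁ _ (VA.te_mem _) b) =
      (S.W b).η x' ≫ eqToHom (S.hFobj (L₁.obj x') b) ≫
        S.F.mmap ((VA.tm (L₁.map f), 𝟙 b) :
          ((VA.tObj (L₁.map f), b) : A × B) ⟶ (L₁.obj x', b))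
          (S.pfM₁ _ (VA.tm_mem _) b) := by
  have h := (S.W b).nat' f
  rw [S.KFE _ (VA.te_mem (L₁.map f)) b, S.KFM _ (VA.tm_mem (L₁.map f)) b] at h
  simp only [← Category.assoc] at h
  have h2 := (cancel_mono _).1 h
  simpa [Category.assoc] using h2

lemma emap_pair_id (a : A) (b : B) (h : Vp.E ((𝟙 a, 𝟙 b) : ((a, b) : A × B) ⟶ (a, b))) :
    S.F.emap ((𝟙 a, 𝟙 b) : ((a, b) : A × B) ⟶ (a, b)) h = 𝟙 (S.F.obj (a, b)) :=
  S.F.emap_id ((a, b) : A × B) h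

/-- The transposed wedge `θ̃` associated to an `L₂`-wedge on `G`. -/
def Tobj (Θ : Wedge VB S.G L₂) : Wedge Vp S.F (L₁.prod L₂) :=
  mkWedge Θ.pt
    (fun p => Θ.η p.2 ≫ eqToHom (S.hGobj (L₂.obj p.2)) ≫ (S.W (L₂.obj p.2)).η p.1 ≫
      eqToHom (S.hFobj (L₁.obj p.1) (L₂.obj p.2)))
    (by
      rintro ⟨x, y⟩ ⟨x', y'⟩ ⟨f, g⟩
      refine (S.omega_nat_iff Θ.pt
        (fun p => Θ.η p.2 ≫ eqToHom (S.hGobj (L₂.obj p.2)) ≫ (S.W (L₂.obj p.2)).η p.1 ≫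
          eqToHom (S.hFobj (L₁.obj p.1) (L₂.obj p.2))) f g).2 ?_
      have hsplitE : S.F.emap
          ((VA.te (L₁.map f), VB.te (L₂.map g)) :
            ((L₁.obj x, L₂.obj y) : A × B) ⟶ (VA.tObj (L₁.map f), VB.tObj (L₂.map g)))
          (S.pfE _ _ (VA.te_mem _) (VB.te_mem _)) =
          S.F.emap ((VA.te (L₁.map f), 𝟙 (L₂.obj y)) :
            ((L₁.obj x, L₂.obj y) : A × B) ⟶ (VA.tObj (L₁.map f), L₂.obj y))
            (S.pfE₁ _ (VA.te_mem _) _) ≫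
          S.F.emap ((𝟙 (VA.tObj (L₁.map f)), VB.te (L₂.map g)) :
            ((VA.tObj (L₁.map f), L₂.obj y) : A × B) ⟶
              (VA.tObj (L₁.map f), VB.tObj (L₂.map g)))
            (S.pfE₂ _ (VB.te_mem _) _) :=
        S.F.emap_comp' _ _ _ (by rw [CategoryTheory.prod_comp]; simp) _ _ _
      have hsplitM : S.F.mmap
          ((VA.tm (L₁.map f), VB.tm (L₂.map g)) :
            ((VA.tObj (L₁.map f), VB.tObj (L₂.map g)) : A × B) ⟶
              (L₁.obj x', L₂.obj y'))
          (S.pfM _ _ (VA.tm_mem _) (VB.tm_mem _)) =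
          S.F.mmap ((𝟙 (L₁.obj x'), VB.tm (L₂.map g)) :
            ((L₁.obj x', VB.tObj (L₂.map g)) : A × B) ⟶ (L₁.obj x', L₂.obj y'))
            (S.pfM₂ _ (VB.tm_mem _) _) ≫
          S.F.mmap ((VA.tm (L₁.map f), 𝟙 (VB.tObj (L₂.map g))) :
            ((VA.tObj (L₁.map f), VB.tObj (L₂.map g)) : A × B) ⟶
              (L₁.obj x', VB.tObj (L₂.map g)))
            (S.pfM₁ _ (VA.tm_mem _) _) :=
        S.F.mmap_comp' _ _ _ (by rw [CategoryTheory.prod_comp]; simp) _ _ _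
      simp only [Category.assoc]
      rw [hsplitE, reassoc_of% (S.Wrow (L₂.obj y) f),
        S.inter (VA.tm (L₁.map f)) (VA.tm_mem _) (VB.te (L₂.map g)) (VB.te_mem _),
        ← reassoc_of% (S.KGE (VB.te (L₂.map g)) (VB.te_mem _) x'),
        reassoc_of% (Θ.nat' g),
        reassoc_of% (S.KGM (VB.tm (L₂.map g)) (VB.tm_mem _) x'), ← hsplitM])

attribute [reducible] Tobj

/-- The `ε`-shifted column wedge of an `(L₁ × L₂)`-wedge. -/
def shiftWedge (Ω : Wedge Vp S.F (L₁.prod L₂)) (y : R₂) {bb : B}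
    (ε : L₂.obj y ⟶ bb) (hε : VB.E ε) : Wedge VA (S.Fb bb) L₁ :=
  mkWedge Ω.pt
    (fun x => Ω.η (x, y) ≫ S.F.emap ((𝟙 (L₁.obj x), ε) :
        ((L₁.obj x, L₂.obj y) : A × B) ⟶ (L₁.obj x, bb)) (S.pfE₂ ε hε _) ≫
      eqToHom (S.hFobj (L₁.obj x) bb).symm)
    (by
      intro x x' f
      have h1 : S.F.emap ((VA.te (L₁.map f), ε) :
            ((L₁.obj x, L₂.obj y) : A × B) ⟶ (VA.tObj (L₁.map f), bb))
            (S.pfE _ _ (VA.te_mem _) hε) =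
          S.F.emap ((𝟙 (L₁.obj x), ε) :
            ((L₁.obj x, L₂.obj y) : A × B) ⟶ (L₁.obj x, bb)) (S.pfE₂ ε hε _) ≫
          S.F.emap ((VA.te (L₁.map f), 𝟙 bb) :
            ((L₁.obj x, bb) : A × B) ⟶ (VA.tObj (L₁.map f), bb)) (S.pfE₁ _ (VA.te_mem _) _) :=
        S.F.emap_comp' _ _ _ (by rw [CategoryTheory.prod_comp]; simp) _ _ _
      have h2 : S.F.emap ((VA.te (L₁.map f), ε) :
            ((L₁.obj x, L₂.obj y) : A × B) ⟶ (VA.tObj (L₁.map f), bb))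
            (S.pfE _ _ (VA.te_mem _) hε) =
          S.F.emap ((VA.te (L₁.map f), 𝟙 (L₂.obj y)) :
            ((L₁.obj x, L₂.obj y) : A × B) ⟶ (VA.tObj (L₁.map f), L₂.obj y))
            (S.pfE₁ _ (VA.te_mem _) _) ≫
          S.F.emap ((𝟙 (VA.tObj (L₁.map f)), ε) :
            ((VA.tObj (L₁.map f), L₂.obj y) : A × B) ⟶ (VA.tObj (L₁.map f), bb))
            (S.pfE₂ ε hε _) :=
        S.F.emap_comp' _ _ _ (by rw [CategoryTheory.prod_comp]; simp) _ _ _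
      rw [S.KFE _ (VA.te_mem (L₁.map f)) bb, S.KFM _ (VA.tm_mem (L₁.map f)) bb]
      simp only [Category.assoc, eqToHom_trans, eqToHom_trans_assoc, eqToHom_eq_id,
        Category.id_comp]
      rw [← reassoc_of% h1, reassoc_of% h2, reassoc_of% (S.omega_row Ω f y),
        reassoc_of% (S.inter (VA.tm (L₁.map f)) (VA.tm_mem _) ε hε)])

attribute [reducible] shiftWedge

/-- The column wedge of an `(L₁ × L₂)`-wedge. -/
def colWedge (Ω : Wedge Vp S.F (L₁.prod L₂)) (y : R₂) : Wedge VA (S.Fb (L₂.obj y)) L₁ :=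
  mkWedge Ω.pt
    (fun x => Ω.η (x, y) ≫ eqToHom (S.hFobj (L₁.obj x) (L₂.obj y)).symm)
    (by
      intro x x' f
      have h := (S.shiftWedge Ω y (𝟙 (L₂.obj y)) (VB.E_id _)).nat' f
      simpa [shiftWedge, S.emap_pair_id] using h)

noncomputable def u (Ω : Wedge Vp S.F (L₁.prod L₂)) (y : R₂) :
    Ω.pt ⟶ (S.W (L₂.obj y)).pt :=
  ((S.hW (L₂.obj y)).some.from (S.colWedge Ω y)).1

lemma u_spec (Ω : Wedge Vp S.F (L₁.prod L₂)) (y : R₂) (x : R₁) :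
    S.u Ω y ≫ (S.W (L₂.obj y)).η x =
      Ω.η (x, y) ≫ eqToHom (S.hFobj (L₁.obj x) (L₂.obj y)).symm :=
  ((S.hW (L₂.obj y)).some.from (S.colWedge Ω y)).2 x

lemma u_uniq (Ω : Wedge Vp S.F (L₁.prod L₂)) (y : R₂) (v : Ω.pt ⟶ (S.W (L₂.obj y)).pt)
    (hv : ∀ x, v ≫ (S.W (L₂.obj y)).η x =
      Ω.η (x, y) ≫ eqToHom (S.hFobj (L₁.obj x) (L₂.obj y)).symm) :
    v = S.u Ω y :=
  congrArg Subtype.val ((S.hW (L₂.obj y)).some.hom_ext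
    (⟨v, hv⟩ : S.colWedge Ω y ⟶ S.W (L₂.obj y)) ((S.hW (L₂.obj y)).some.from _))

/-- The inverse transposition. -/
noncomputable def Sobj (Ω : Wedge Vp S.F (L₁.prod L₂)) : Wedge VB S.G L₂ :=
  mkWedge Ω.pt (fun y => S.u Ω y ≫ eqToHom (S.hGobj (L₂.obj y)).symm)
    (by
      intro y y' g
      have hc1 : ∀ x : R₁,
          (S.u Ω y ≫ eqToHom (S.hGobj (L₂.obj y)).symm ≫
            S.G.emap (VB.te (L₂.map g)) (VB.te_mem _) ≫
            eqToHom (S.hGobj (VB.tObj (L₂.map g)))) ≫ (S.W (VB.tObj (L₂.map g))).η x =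
          (S.shiftWedge Ω y (VB.te (L₂.map g)) (VB.te_mem _)).η x := by
        intro x
        rw [← cancel_mono (eqToHom (S.hFobj (L₁.obj x) (VB.tObj (L₂.map g))))]
        simp only [Category.assoc]
        rw [S.KGE (VB.te (L₂.map g)) (VB.te_mem _) x]
        simp only [eqToHom_trans_assoc, eqToHom_eq_id, Category.id_comp]
        rw [reassoc_of% (S.u_spec Ω y x)]
        simp [shiftWedge]
      have hc2 : ∀ x : R₁,
          (S.u Ω y' ≫ eqToHom (S.hGobj (L₂.obj y')).symm ≫
            S.G.mmap (VB.tm (L₂.map g)) (VB.tm_mem _) ≫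
            eqToHom (S.hGobj (VB.tObj (L₂.map g)))) ≫ (S.W (VB.tObj (L₂.map g))).η x =
          (S.shiftWedge Ω y (VB.te (L₂.map g)) (VB.te_mem _)).η x := by
        intro x
        rw [← cancel_mono (eqToHom (S.hFobj (L₁.obj x) (VB.tObj (L₂.map g))))]
        simp only [Category.assoc]
        rw [S.KGM (VB.tm (L₂.map g)) (VB.tm_mem _) x]
        simp only [eqToHom_trans_assoc, eqToHom_eq_id, Category.id_comp]
        rw [reassoc_of% (S.u_spec Ω y' x)]
        simp only [eqToHom_trans_assoc, eqToHom_eq_id, Category.id_comp]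
        rw [← S.omega_col Ω x g]
        simp [shiftWedge]
      have hcc := congrArg Subtype.val
        ((S.hW (VB.tObj (L₂.map g))).some.hom_ext
          (⟨_, hc1⟩ : S.shiftWedge Ω y (VB.te (L₂.map g)) (VB.te_mem _) ⟶
            S.W (VB.tObj (L₂.map g)))
          (⟨_, hc2⟩ : S.shiftWedge Ω y (VB.te (L₂.map g)) (VB.te_mem _) ⟶
            S.W (VB.tObj (L₂.map g))))
      rw [← cancel_mono (eqToHom (S.hGobj (VB.tObj (L₂.map g))))]
      simpa [Category.assoc] using hcc)

attribute [reducible] Sobj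

def Tfun : Wedge VB S.G L₂ ⥤ Wedge Vp S.F (L₁.prod L₂) where
  obj := S.Tobj
  map {Θ₁ Θ₂} σ := ⟨σ.1, by
    rintro ⟨x, y⟩
    dsimp only [Tobj, mkWedge_η]
    rw [reassoc_of% (σ.2 y)]⟩
  map_id _ := Subtype.ext rfl
  map_comp _ _ := Subtype.ext rfl

attribute [reducible] Tfun

noncomputable def Sfun : Wedge Vp S.F (L₁.prod L₂) ⥤ Wedge VB S.G L₂ where
  obj := S.Sobj
  map {Ω₁ Ω₂} σ := ⟨σ.1, by
    intro y
    dsimp only [Sobj, mkWedge_η]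
    have hu : σ.1 ≫ S.u Ω₂ y = S.u Ω₁ y :=
      S.u_uniq Ω₁ y _ (fun x => by
        rw [Category.assoc, S.u_spec Ω₂ y x, reassoc_of% (σ.2 (x, y))])
    rw [← Category.assoc, hu]⟩
  map_id _ := Subtype.ext rfl
  map_comp _ _ := Subtype.ext rfl

end FSetup

section Glue

lemma wedge_ext {A : Type u} [Category.{v} A] {CC : Type u₂} [Category.{v₂} CC]
    {V : Variance A} {F : VFunctor V CC} {R : Type u₃} [Category.{v₃} R] {L : R ⥤ A}
    {W₁ W₂ : Wedge V F L} (hpt : W₁.pt = W₂.pt)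
    (hη : ∀ x, W₁.η x = eqToHom hpt ≫ W₂.η x) : W₁ = W₂ := by
  obtain ⟨p₁, e₁, n₁⟩ := W₁
  obtain ⟨p₂, e₂, n₂⟩ := W₂
  cases hpt
  have he : e₁ = e₂ := funext fun x => by simpa using hη x
  subst he
  rfl

lemma wedge_hom_heq {A : Type u} [Category.{v} A] {CC : Type u₂} [Category.{v₂} CC]
    {V : Variance A} {F : VFunctor V CC} {R : Type u₃} [Category.{v₃} R] {L : R ⥤ A}
    {W₁ W₂ W₁' W₂' : Wedge V F L} (h₁ : W₁ = W₁') (h₂ : W₂ = W₂')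
    (f : W₁ ⟶ W₂) (f' : W₁' ⟶ W₂')
    (hv : f.1 = eqToHom (congrArg Wedge.pt h₁) ≫ f'.1 ≫
      eqToHom (congrArg Wedge.pt h₂).symm) : HEq f f' := by
  subst h₁; subst h₂
  exact heq_of_eq (Subtype.ext (by simpa using hv))

open CategoryTheory.Limits in
noncomputable def transportTerminal {C : Type*} [Category C] {D : Type*} [Category D]
    (T : C ⥤ D) (Sf : D ⥤ C) (h1 : T ⋙ Sf = 𝟭 C) (h2 : Sf ⋙ T = 𝟭 D)
    {X : C} (hX : IsTerminal X) : IsTerminal (T.obj X) := by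
  have inj : ∀ {P Q : D} (f g : P ⟶ Q), Sf.map f = Sf.map g → f = g := by
    intro P Q f g hfg
    have c1 := Functor.congr_hom h2 f
    have c2 := Functor.congr_hom h2 g
    simp only [Functor.comp_map, Functor.id_map] at c1 c2
    rw [hfg] at c1
    exact (cancel_mono _).1 ((cancel_epi _).1 (c1.symm.trans c2))
  exact IsTerminal.ofUniqueHom
    (fun Y => eqToHom (Functor.congr_obj h2 Y).symm ≫ T.map (hX.from (Sf.obj Y)))
    (fun Y m => by
      apply inj
      have e1 := hX.hom_ext (Sf.map m ≫ eqToHom (Functor.congr_obj h1 X))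
        (Sf.map (eqToHom (Functor.congr_obj h2 Y).symm ≫
          T.map (hX.from (Sf.obj Y))) ≫ eqToHom (Functor.congr_obj h1 X))
      rwa [cancel_mono] at e1)

end Glue


end FubiniKit



open CategoryTheory.Limits

/-- Fubini theorem for ends: with `Vp` the product variance on `A × B` (componentwise, as
recorded by `hE, hM, hsp, htp`), `Fb b` the partial functor `F^b` (recorded by
`hFobj, hFmap`), `W b` a terminal `L₁`-wedge computing `∫_{L₁}F^b`, and
`G = ∫_{L₁}F : B ⥤ C` the parameter functor of variance (recorded by `hGobj, hGmap`),
the transposition `(c, θ) ↦ (c, θ̃)` with `θ̃_{(x,y)} = ω^{L₂ y}_x ∘ θ_y` is an isomorphism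
between the category of `L₂`-wedges of `∫_{L₁}F` and the category of `(L₁ × L₂)`-wedges of
`F`; in particular `∫_{L₁×L₂}F` exists iff `∫_{L₂}∫_{L₁}F` exists, and they agree. -/
theorem fubini {A : Type u} [Category.{v} A] {B : Type u} [Category.{v} B]
    {CC : Type u₂} [Category.{v₂} CC]
    (VA : Variance A) (VB : Variance B) (Vp : Variance (A × B))
    (hE : ∀ {p q : A × B} (φ : p ⟶ q), Vp.E φ ↔ VA.E φ.1 ∧ VB.E φ.2)
    (hM : ∀ {p q : A × B} (φ : p ⟶ q), Vp.M φ ↔ VA.M φ.1 ∧ VB.M φ.2)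
    (hsp : ∀ {p q : A × B} (φ : p ⟶ q), Vp.sObj φ = (VA.sObj φ.1, VB.sObj φ.2))
    (htp : ∀ {p q : A × B} (φ : p ⟶ q), Vp.tObj φ = (VA.tObj φ.1, VB.tObj φ.2))
    (F : VFunctor Vp CC)
    {R₁ : Type u₃} [Category.{v₃} R₁] (L₁ : R₁ ⥤ A)
    {R₂ : Type u₃} [Category.{v₃} R₂] (L₂ : R₂ ⥤ B)
    (Fb : B → VFunctor VA CC)
    (hFobj : ∀ (a : A) (b : B), (Fb b).obj a = F.obj (a, b))
    (hFmap : ∀ {a a' : A} (f : a ⟶ a') (b : B),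
      (Fb b).map f =
        eqToHom (by rw [hFobj, hsp ((f, 𝟙 b) : (a, b) ⟶ (a', b)), VB.sObj_id]) ≫
          F.map ((f, 𝟙 b) : (a, b) ⟶ (a', b)) ≫
          eqToHom (by rw [hFobj, htp ((f, 𝟙 b) : (a, b) ⟶ (a', b)), VB.tObj_id]))
    (W : ∀ b : B, Wedge VA (Fb b) L₁)
    (hW : ∀ b : B, Nonempty (IsTerminal (W b)))
    (G : VFunctor VB CC)
    (hGobj : ∀ b : B, G.obj b = (W b).pt)
    (hGmap : ∀ (a : R₁) {b b' : B} (g : b ⟶ b'),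
      eqToHom (hGobj (VB.sObj g)).symm ≫ G.map g ≫ eqToHom (hGobj (VB.tObj g)) ≫
          (W (VB.tObj g)).η a =
        (W (VB.sObj g)).η a ≫
          eqToHom (by
            rw [hFobj, hsp ((𝟙 (L₁.obj a), g) : (L₁.obj a, b) ⟶ (L₁.obj a, b')),
              VA.sObj_id]) ≫
          F.map ((𝟙 (L₁.obj a), g) : (L₁.obj a, b) ⟶ (L₁.obj a, b')) ≫
          eqToHom (by
            rw [hFobj, htp ((𝟙 (L₁.obj a), g) : (L₁.obj a, b) ⟶ (L₁.obj a, b')),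
              VA.tObj_id])) :
    (∃ (T : Wedge VB G L₂ ⥤ Wedge Vp F (L₁.prod L₂))
        (S' : Wedge Vp F (L₁.prod L₂) ⥤ Wedge VB G L₂),
      T ⋙ S' = 𝟭 (Wedge VB G L₂) ∧ S' ⋙ T = 𝟭 (Wedge Vp F (L₁.prod L₂)) ∧
      ∃ hpt : ∀ Θ : Wedge VB G L₂, (T.obj Θ).pt = Θ.pt,
        ∀ (Θ : Wedge VB G L₂) (x : R₁) (y : R₂),
          (T.obj Θ).η (x, y) =
            eqToHom (hpt Θ) ≫ Θ.η y ≫ eqToHom (hGobj (L₂.obj y)) ≫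
              (W (L₂.obj y)).η x ≫ eqToHom (hFobj (L₁.obj x) (L₂.obj y))) ∧
    ((∃ Θ : Wedge VB G L₂, Nonempty (IsTerminal Θ)) ↔
      (∃ Ω : Wedge Vp F (L₁.prod L₂), Nonempty (IsTerminal Ω))) := by
  let S : FSetup CC VA VB Vp L₁ L₂ :=
    ⟨hE, hM, hsp, htp, F, Fb, hFobj, hFmap, W, hW, G, hGobj, hGmap⟩
  have hobj1 : ∀ Θ : Wedge VB S.G L₂, S.Sobj (S.Tobj Θ) = Θ := by
    intro Θ
    refine wedge_ext rfl ?_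
    intro y
    have hu : Θ.η y ≫ eqToHom (S.hGobj (L₂.obj y)) = S.u (S.Tobj Θ) y :=
      S.u_uniq (S.Tobj Θ) y _ (fun x => by
        simp [FSetup.Tobj, Category.assoc])
    show S.u (S.Tobj Θ) y ≫ eqToHom (S.hGobj (L₂.obj y)).symm = _
    rw [← hu]
    simp
  have hobj2 : ∀ Ω : Wedge Vp S.F (L₁.prod L₂), S.Tobj (S.Sobj Ω) = Ω := by
    intro Ω
    refine wedge_ext rfl ?_
    rintro ⟨x, y⟩
    show (S.Sobj Ω).η y ≫ eqToHom (S.hGobj (L₂.obj y)) ≫ (S.W (L₂.obj y)).η x ≫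
      eqToHom (S.hFobj (L₁.obj x) (L₂.obj y)) = _
    dsimp only [FSetup.Sobj, mkWedge_η]
    simp only [Category.assoc, eqToHom_trans_assoc, eqToHom_eq_id, Category.id_comp]
    rw [reassoc_of% (S.u_spec Ω y x)]
    simp
  have hTS : S.Tfun ⋙ S.Sfun = 𝟭 (Wedge VB S.G L₂) := by
    refine Functor.hext (fun Θ => hobj1 Θ) ?_
    intro Θ₁ Θ₂ σ
    refine wedge_hom_heq (hobj1 Θ₁) (hobj1 Θ₂) _ _ ?_
    show σ.1 = 𝟙 _ ≫ σ.1 ≫ 𝟙 _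
    simp
  have hST : S.Sfun ⋙ S.Tfun = 𝟭 (Wedge Vp S.F (L₁.prod L₂)) := by
    refine Functor.hext (fun Ω => hobj2 Ω) ?_
    intro Ω₁ Ω₂ σ
    refine wedge_hom_heq (hobj2 Ω₁) (hobj2 Ω₂) _ _ ?_
    show σ.1 = 𝟙 _ ≫ σ.1 ≫ 𝟙 _
    simp
  refine ⟨⟨S.Tfun, S.Sfun, hTS, hST, fun Θ => rfl, fun Θ x y => ?_⟩, ?_⟩
  · show (S.Tobj Θ).η (x, y) = _
    dsimp only [FSetup.Tobj, mkWedge_η]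
    simp
    rfl
  · constructor
    · rintro ⟨Θ, ⟨hΘ⟩⟩
      exact ⟨S.Tfun.obj Θ, ⟨transportTerminal S.Tfun S.Sfun hTS hST hΘ⟩⟩
    · rintro ⟨Ω, ⟨hΩ⟩⟩
      exact ⟨S.Sfun.obj Ω, ⟨transportTerminal S.Sfun S.Tfun hST hTS hΩ⟩⟩
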